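/- Zero-infinity law for the first moment of all-zero-attribute isolated nodes: Assume Γ(0) < Γ(1) and, with ρ > 0, that 1 + ρ ln μ(0) > 0. Then for any ρ-admissible scaling L : ℕ → ℕ, the quantity E[I_n^{(0)}(L_n)] = n μ(0)^{L_n} (1 − Γ(0)^{L_n})^{n−1} converges, as n → ∞, to ∞ if 1 + ρ ln Γ(0) < 0, and to 0 if 1 + ρ ln Γ(0) > 0. -/

import Mathlib

open MeasureTheory Filter

/-- Bernoulli measure on `Bool` with parameter `p` = probability of `true`. -/
noncomputable def bern (p : ℝ) : Measure Bool :=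
  (Real.toNNReal p) • Measure.dirac true + (Real.toNNReal (1 - p)) • Measure.dirac false

/-- Uniform distribution on `[0,1]`. -/
noncomputable def unif01 : Measure ℝ := MeasureTheory.volume.restrict (Set.Icc (0:ℝ) 1)

/-- The probability space of the homogeneous binary MAG model `M(n;L)`:
i.i.d. Bernoulli attribute bits and, independently, i.i.d. Uniform(0,1) variables. -/
noncomputable def magMeasure (n L : ℕ) (p : ℝ) :
    Measure ((Fin n → Fin L → Bool) × (Fin n × Fin n → ℝ)) :=
  (Measure.pi fun _ : Fin n => Measure.pi fun _ : Fin L => bern p).prod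
    (Measure.pi fun _ : Fin n × Fin n => unif01)

/-- `Q_L(a,b) = ∏_{ℓ} q(a_ℓ, b_ℓ)`. -/
def QL {L : ℕ} (q : Bool → Bool → ℝ) (a b : Fin L → Bool) : ℝ :=
  ∏ ℓ : Fin L, q (a ℓ) (b ℓ)

/-- Distinct nodes `u, v` are adjacent iff `U(u,v) ≤ Q_L(A(u),A(v))`, where the uniform
variable attached to the unordered pair `{u,v}` is the one indexed by `(min u v, max u v)`. -/
def Adj {n L : ℕ} (q : Bool → Bool → ℝ)
    (ω : (Fin n → Fin L → Bool) × (Fin n × Fin n → ℝ)) (u v : Fin n) : Prop :=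
  u ≠ v ∧ ω.2 (min u v, max u v) ≤ QL q (ω.1 u) (ω.1 v)

/-- Node `u` is isolated if it is adjacent to no other node. -/
def Isolated {n L : ℕ} (q : Bool → Bool → ℝ)
    (ω : (Fin n → Fin L → Bool) × (Fin n × Fin n → ℝ)) (u : Fin n) : Prop :=
  ∀ v, ¬ Adj q ω u v

/-- `S_L(u)`: the number of attributes exhibited by node `u`. -/
def Scount {n L : ℕ} (ω : (Fin n → Fin L → Bool) × (Fin n × Fin n → ℝ)) (u : Fin n) : ℕ :=
  (Finset.univ.filter fun ℓ : Fin L => ω.1 u ℓ = true).card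

open scoped Classical in
/-- `I_n(L)`: the number of isolated nodes. -/
noncomputable def numIsolated {n L : ℕ} (q : Bool → Bool → ℝ)
    (ω : (Fin n → Fin L → Bool) × (Fin n × Fin n → ℝ)) : ℕ :=
  (Finset.univ.filter fun u : Fin n => Isolated q ω u).card

open scoped Classical in
/-- `I_n^{(k)}(L)`: the number of isolated nodes `u` with `S_L(u) = k`. -/
noncomputable def numIsolatedWith {n L : ℕ} (q : Bool → Bool → ℝ) (k : ℕ)
    (ω : (Fin n → Fin L → Bool) × (Fin n × Fin n → ℝ)) : ℕ :=
  (Finset.univ.filter fun u : Fin n => Isolated q ω u ∧ Scount ω u = k).card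

open scoped Classical in
/-- `ξ^{(k)}(u)`: the indicator that node `u` is isolated and `S_L(u) = k`. -/
noncomputable def xiInd {n L : ℕ} (q : Bool → Bool → ℝ) (k : ℕ)
    (ω : (Fin n → Fin L → Bool) × (Fin n × Fin n → ℝ)) (u : Fin n) : ℝ :=
  if Isolated q ω u ∧ Scount ω u = k then 1 else 0

/-- `Γ(a) = μ(0) q(a,0) + μ(1) q(a,1)`, with `μ(1) = μ1`, `μ(0) = 1 - μ1`. -/
def Gam (μ1 : ℝ) (q : Bool → Bool → ℝ) (a : Bool) : ℝ :=
  (1 - μ1) * q a false + μ1 * q a true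

/-- A scaling `L : ℕ → ℕ` is `ρ`-admissible if `L_n ~ ρ ln n` as `n → ∞`. -/
def Admissible (ρ : ℝ) (L : ℕ → ℕ) : Prop :=
  Asymptotics.IsEquivalent Filter.atTop (fun n => (L n : ℝ)) (fun n => ρ * Real.log n)

/-- `G(ν,μ) = (μ/ν)^ν ((1-μ)/(1-ν))^{1-ν}` (real powers; the conventions at `ν = 0,1`
agree with the continuous extension). -/
noncomputable def Gfun (ν μ : ℝ) : ℝ :=
  (μ / ν) ^ ν * ((1 - μ) / (1 - ν)) ^ (1 - ν)

/-- `Q*_L(a) = E[Q_L(a,A)]`, `A` a vector of `L` i.i.d. Bernoulli(μ1) bits. -/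
noncomputable def Qstar {L : ℕ} (μ1 : ℝ) (q : Bool → Bool → ℝ) (a : Fin L → Bool) : ℝ :=
  ∫ b, QL q a b ∂(Measure.pi fun _ : Fin L => bern μ1)

/-- `Q**_L(a,b) = E[Q_L(a,A) Q_L(b,A)]`. -/
noncomputable def Qstarstar {L : ℕ} (μ1 : ℝ) (q : Bool → Bool → ℝ) (a b : Fin L → Bool) : ℝ :=
  ∫ c, QL q a c * QL q b c ∂(Measure.pi fun _ : Fin L => bern μ1)

/-- `Q̃_L(a,b) = Q*_L(a) + Q*_L(b) − Q**_L(a,b)`. -/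
noncomputable def Qtilde {L : ℕ} (μ1 : ℝ) (q : Bool → Bool → ℝ) (a b : Fin L → Bool) : ℝ :=
  Qstar μ1 q a + Qstar μ1 q b - Qstarstar μ1 q a b


section aux
open Real
set_option maxHeartbeats 1000000

lemma bern_singleton (p : ℝ) (b : Bool) :
    bern p {b} = ENNReal.ofReal (bif b then p else 1 - p) := by
  cases b <;>
  simp [bern, Measure.dirac_apply', ENNReal.ofReal, Set.indicator_apply, ENNReal.smul_def, mul_one, - Measure.coe_nnreal_smul]

lemma bern_prob (p : ℝ) (h0 : 0 ≤ p) (h1 : p ≤ 1) : IsProbabilityMeasure (bern p) := by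
  constructor
  have : (Set.univ : Set Bool) = {true} ∪ {false} := by ext b; cases b <;> simp
  rw [this, measure_union (by simp) (by simp), bern_singleton p, bern_singleton p]
  simp only [cond_true, cond_false]
  rw [← ENNReal.ofReal_add h0 (by linarith)]
  norm_num

lemma unif01_prob : IsProbabilityMeasure unif01 := by
  constructor
  rw [unif01, Measure.restrict_apply_univ, Real.volume_Icc]
  norm_num

lemma unif01_Ioi (t : ℝ) (h0 : 0 ≤ t) :
    unif01 (Set.Ioi t) = ENNReal.ofReal (1 - t) := by
  rw [unif01, Measure.restrict_apply measurableSet_Ioi]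
  have : Set.Ioi t ∩ Set.Icc 0 1 = Set.Ioc t 1 := by
    ext x
    simp only [Set.mem_inter_iff, Set.mem_Ioi, Set.mem_Icc, Set.mem_Ioc]
    constructor
    · rintro ⟨h, _, h2⟩; exact ⟨h, h2⟩
    · rintro ⟨h, h2⟩; exact ⟨h, by linarith, h2⟩
  rw [this, Real.volume_Ioc]

section event
variable {n L : ℕ} (μ1 : ℝ) (q : Bool → Bool → ℝ) (u : Fin n)

/-- index of the pair `{u,v}` -/
def epair (u v : Fin n) : Fin n × Fin n := (min u v, max u v)

lemma epair_inj (u : Fin n) : Function.Injective (epair u) := by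
  intro v w h
  rw [epair, epair, Prod.mk.injEq] at h
  obtain ⟨h1, h2⟩ := h
  rcases le_total u v with hv | hv <;> rcases le_total u w with hw | hw
  · rw [min_eq_left hv, min_eq_left hw] at h1
    rwa [max_eq_right hv, max_eq_right hw] at h2
  · rw [max_eq_right hv, max_eq_left hw] at h2
    rw [min_eq_left hv, min_eq_right hw] at h1
    exact h2.trans h1
  · rw [max_eq_left hv, max_eq_right hw] at h2
    rw [min_eq_right hv, min_eq_left hw] at h1
    exact h1.trans h2
  · rw [min_eq_right hv, min_eq_right hw] at h1
    exact h1
end event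

lemma QL_nonneg {L : ℕ} (q : Bool → Bool → ℝ) (hq : ∀ a b, 0 < q a b ∧ q a b < 1)
    (a b : Fin L → Bool) : 0 ≤ QL q a b :=
  Finset.prod_nonneg fun ℓ _ => (hq _ _).1.le

lemma QL_le_one {L : ℕ} (q : Bool → Bool → ℝ) (hq : ∀ a b, 0 < q a b ∧ q a b < 1)
    (a b : Fin L → Bool) : QL q a b ≤ 1 :=
  Finset.prod_le_one (fun ℓ _ => (hq _ _).1.le) (fun ℓ _ => (hq _ _).2.le)

section main
variable {n L : ℕ}

open scoped Classical in
lemma measure_event (μ1 : ℝ) (h0 : 0 ≤ μ1) (h1 : μ1 ≤ 1)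
    (q : Bool → Bool → ℝ) (hq : ∀ a b, 0 < q a b ∧ q a b < 1) (u : Fin n) :
    magMeasure n L μ1 {ω | Isolated q ω u ∧ Scount ω u = 0}
      = ENNReal.ofReal ((1 - μ1) ^ L * (1 - Gam μ1 q false ^ L) ^ (n - 1)) := by
  haveI hbp : IsProbabilityMeasure (bern μ1) := bern_prob μ1 h0 h1
  haveI := unif01_prob
  set A := Fin n → Fin L → Bool
  set X := Fin n × Fin n → ℝ
  set μA : Measure A := Measure.pi fun _ : Fin n => Measure.pi fun _ : Fin L => bern μ1 with hμA
  set μU : Measure X := Measure.pi fun _ : Fin n × Fin n => unif01 with hμU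
  set z : Fin L → Bool := fun _ => false with hz
  set E : Set (A × X) := {ω | Isolated q ω u ∧ Scount ω u = 0} with hE
  -- sections
  set T : A → (Fin n × Fin n) → Set ℝ :=
    fun a p => {x : ℝ | ∀ v, v ≠ u → epair u v = p → QL q (a u) (a v) < x} with hT
  set S : A → Set X := fun a => if a u = z then Set.univ.pi (T a) else ∅ with hS
  -- Scount = 0 iff all-false
  have hScount : ∀ (ω : A × X), Scount ω u = 0 ↔ ω.1 u = z := by
    intro ω
    rw [Scount, Finset.card_eq_zero, Finset.filter_eq_empty_iff]
    simp [funext_iff, hz]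
  -- decomposition
  have hdecomp : E = ⋃ a : A, {a} ×ˢ S a := by
    ext ⟨a, x⟩
    simp only [hE, Set.mem_setOf_eq, Set.mem_iUnion, Set.mem_prod, Set.mem_singleton_iff, hS]
    constructor
    · rintro ⟨hiso, hsc⟩
      refine ⟨a, rfl, ?_⟩
      have hz' : a u = z := (hScount (a, x)).mp hsc
      rw [if_pos hz']
      intro p _
      intro v hvu hev
      have := hiso v
      rw [Adj] at this
      push_neg at this
      subst hev
      simpa [epair, min, max] using this (Ne.symm hvu)
    · rintro ⟨a', rfl, hx⟩
      by_cases hz' : a u = z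
      · rw [if_pos hz'] at hx
        refine ⟨?_, (hScount (a, x)).mpr hz'⟩
        intro v
        rw [Adj]
        rintro ⟨huv, hle⟩
        have := hx (epair u v) (Set.mem_univ _) v (Ne.symm huv) rfl
        rw [epair] at this
        exact absurd hle (not_le.mpr this)
      · rw [if_neg hz'] at hx
        exact absurd hx (Set.notMem_empty x)
  -- measurability of T sets
  have hTmeas : ∀ a p, MeasurableSet (T a p) := by
    intro a p
    have : T a p = ⋂ v : Fin n, {x : ℝ | v ≠ u → epair u v = p → QL q (a u) (a v) < x} := by
      ext x; simp [hT, Set.mem_iInter]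
    rw [this]
    refine MeasurableSet.iInter fun v => ?_
    by_cases hv : v ≠ u ∧ epair u v = p
    · have : {x : ℝ | v ≠ u → epair u v = p → QL q (a u) (a v) < x}
          = Set.Ioi (QL q (a u) (a v)) := by
        ext x; simp [hv.1, hv.2, Set.mem_Ioi]
      rw [this]; exact measurableSet_Ioi
    · have : {x : ℝ | v ≠ u → epair u v = p → QL q (a u) (a v) < x} = Set.univ := by
        ext x
        simp only [Set.mem_setOf_eq, Set.mem_univ, iff_true]
        intro h1 h2
        exact absurd ⟨h1, h2⟩ hv
      rw [this]; exact MeasurableSet.univ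
  have hSmeas : ∀ a, MeasurableSet (S a) := by
    intro a
    by_cases h : a u = z
    · simp only [hS, if_pos h]
      exact MeasurableSet.univ_pi fun p => hTmeas a _
    · simp only [hS, if_neg h]
      exact MeasurableSet.empty
  have hsingmeas : ∀ a : A, MeasurableSet ({a} : Set A) := by
    intro a
    have : ({a} : Set A) = Set.univ.pi fun w => ({a w} : Set (Fin L → Bool)) := by
      rw [Set.univ_pi_singleton]
    rw [this]
    refine MeasurableSet.univ_pi fun w => ?_
    have : ({a w} : Set (Fin L → Bool)) = Set.univ.pi fun ℓ => ({a w ℓ} : Set Bool) := by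
      rw [Set.univ_pi_singleton]
    rw [this]
    exact MeasurableSet.univ_pi fun ℓ => measurableSet_singleton _
  -- measure of the union
  have hmeas : magMeasure n L μ1 E = ∑ a : A, μA {a} * μU (S a) := by
    rw [hdecomp, magMeasure]
    rw [measure_iUnion ?_ (fun a => (hsingmeas a).prod (hSmeas a))]
    · rw [tsum_fintype]
      congr 1
      ext a
      exact Measure.prod_prod _ _
    · intro a b hab
      simp only [Set.disjoint_left]
      rintro ⟨a', x⟩ ⟨ha, _⟩ ⟨hb, _⟩
      simp only [Set.mem_singleton_iff] at ha hb
      exact hab (ha ▸ hb ▸ rfl)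
  -- bounds for Gamma
  set Γ : ℝ := Gam μ1 q false with hΓdef
  have hΓ0 : 0 ≤ Γ := by
    have := (hq false false).1; have := (hq false true).1
    have : (0:ℝ) ≤ 1 - μ1 := by linarith
    unfold Γ; rw [Gam]
    nlinarith [(hq false false).1, (hq false true).1]
  have hΓ1 : Γ ≤ 1 := by
    unfold Γ; rw [Gam]
    nlinarith [(hq false false).2, (hq false true).2, (hq false false).1, (hq false true).1]
  -- weights
  set m : Bool → ℝ := fun b => bif b then μ1 else 1 - μ1 with hm
  have hm0 : ∀ b, 0 ≤ m b := by intro b; cases b <;> simp [hm] <;> linarith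
  -- single-configuration attribute measure
  have hA_single : ∀ a : A, μA {a} = ∏ w, ∏ ℓ, ENNReal.ofReal (m (a w ℓ)) := by
    intro a
    rw [hμA, ← Set.univ_pi_singleton a, Measure.pi_pi]
    refine Finset.prod_congr rfl fun w _ => ?_
    rw [← Set.univ_pi_singleton (a w), Measure.pi_pi]
    refine Finset.prod_congr rfl fun ℓ _ => ?_
    exact bern_singleton μ1 (a w ℓ)
  -- values of the T-sets
  have hTval : ∀ (a : A) (v : Fin n), v ≠ u → T a (epair u v) = Set.Ioi (QL q (a u) (a v)) := by
    intro a v hv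
    ext x
    simp only [hT, Set.mem_setOf_eq, Set.mem_Ioi]
    constructor
    · intro h; exact h v hv rfl
    · intro h w _ hew
      rw [epair_inj u hew]; exact h
  -- uniform-part measure of sections
  set P : Finset (Fin n × Fin n) := (Finset.univ.erase u).image (epair u) with hP
  have hUS : ∀ a : A, a u = z →
      μU (S a) = ∏ v ∈ Finset.univ.erase u, ENNReal.ofReal (1 - QL q (a u) (a v)) := by
    intro a ha
    have h1 : μU (S a) = ∏ p : Fin n × Fin n, unif01 (T a p) := by
      simp only [hS, if_pos ha]
      rw [hμU, Measure.pi_pi]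
    rw [h1]
    rw [← Finset.prod_subset (Finset.subset_univ P) (fun p _ hp => ?_)]
    · rw [hP, Finset.prod_image (fun x hx y hy hxy => epair_inj u hxy)]
      refine Finset.prod_congr rfl fun v hv => ?_
      rw [hTval a v (Finset.ne_of_mem_erase hv)]
      exact unif01_Ioi _ (QL_nonneg q hq _ _)
    · have : T a p = Set.univ := by
        ext x
        simp only [hT, Set.mem_setOf_eq, Set.mem_univ, iff_true]
        intro v hv hev
        exact (hp (Finset.mem_image.mpr ⟨v, Finset.mem_erase.mpr ⟨hv, Finset.mem_univ v⟩, hev⟩)).elim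
      rw [this]
      exact measure_univ
  -- node weights
  set g : Fin n → (Fin L → Bool) → ENNReal := fun w b =>
    (∏ ℓ, ENNReal.ofReal (m (b ℓ))) *
      (if w = u then (if b = z then 1 else 0) else ENNReal.ofReal (1 - QL q z b)) with hg
  have hterm : ∀ a : A, μA {a} * μU (S a) = ∏ w, g w (a w) := by
    intro a
    by_cases ha : a u = z
    · rw [hA_single a, hUS a ha, hg]
      rw [Finset.prod_mul_distrib]
      congr 1
      rw [← Finset.mul_prod_erase Finset.univ _ (Finset.mem_univ u)]
      rw [if_pos rfl, if_pos ha, one_mul]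
      refine Finset.prod_congr rfl fun w hw => ?_
      rw [if_neg (Finset.ne_of_mem_erase hw), ha]
    · have hempty : μU (S a) = 0 := by simp only [hS, if_neg ha]; exact measure_empty
      rw [hempty, mul_zero]
      rw [Finset.prod_eq_zero (Finset.mem_univ u)]
      simp [hg, ha]
  -- factorize the sum
  have hfact : ∑ a : A, ∏ w, g w (a w) = ∏ w, ∑ b, g w b := by
    rw [Finset.prod_univ_sum (fun _ => Finset.univ) g, Fintype.piFinset_univ]
  -- node-sum values
  have hmz : ∏ ℓ : Fin L, ENNReal.ofReal (m (z ℓ)) = ENNReal.ofReal ((1 - μ1) ^ L) := by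
    rw [ENNReal.ofReal_pow (by linarith)]
    simp [hz, hm]
  have hgu : ∑ b, g u b = ENNReal.ofReal ((1 - μ1) ^ L) := by
    simp only [hg, eq_self_iff_true, if_true, mul_ite, mul_one, mul_zero]
    rw [Finset.sum_ite_eq' Finset.univ z, if_pos (Finset.mem_univ z)]
    exact hmz
  have hgw : ∀ w, w ≠ u → ∑ b, g w b = ENNReal.ofReal (1 - Γ ^ L) := by
    intro w hw
    simp only [hg, if_neg hw]
    have h1 : ∀ b : Fin L → Bool,
        (∏ ℓ, ENNReal.ofReal (m (b ℓ))) * ENNReal.ofReal (1 - QL q z b)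
          = ENNReal.ofReal ((∏ ℓ, m (b ℓ)) * (1 - QL q z b)) := by
      intro b
      rw [← ENNReal.ofReal_prod_of_nonneg (fun ℓ _ => hm0 _),
        ← ENNReal.ofReal_mul (Finset.prod_nonneg fun ℓ _ => hm0 _)]
    rw [Finset.sum_congr rfl fun b _ => h1 b]
    rw [← ENNReal.ofReal_sum_of_nonneg (fun b _ => mul_nonneg
      (Finset.prod_nonneg fun ℓ _ => hm0 _) (by linarith [QL_le_one q hq z b]))]
    congr 1
    have hQz : ∀ b : Fin L → Bool, QL q z b = ∏ ℓ, q false (b ℓ) := by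
      intro b; rw [QL]
    have h2 : ∑ b : Fin L → Bool, ∏ ℓ, m (b ℓ) = 1 := by
      have := (Finset.prod_univ_sum (fun _ : Fin L => (Finset.univ : Finset Bool))
        (fun _ j => m j)).symm
      rw [Fintype.piFinset_univ] at this
      rw [this]
      have : ∑ j : Bool, m j = 1 := by simp [hm]
      rw [this, Finset.prod_const_one]
    have h3 : ∑ b : Fin L → Bool, (∏ ℓ, m (b ℓ)) * QL q z b = Γ ^ L := by
      have hsplit : ∀ b : Fin L → Bool, (∏ ℓ, m (b ℓ)) * QL q z b
          = ∏ ℓ, (m (b ℓ) * q false (b ℓ)) := by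
        intro b; rw [hQz b, ← Finset.prod_mul_distrib]
      rw [Finset.sum_congr rfl fun b _ => hsplit b]
      have := (Finset.prod_univ_sum (fun _ : Fin L => (Finset.univ : Finset Bool))
        (fun _ j => m j * q false j)).symm
      rw [Fintype.piFinset_univ] at this
      rw [this]
      have : ∑ j : Bool, m j * q false j = Γ := by
        simp only [hm, hΓdef, Gam, Fintype.sum_bool, cond_true, cond_false]
        ring
      rw [this, Finset.prod_const, Finset.card_univ, Fintype.card_fin]
    calc ∑ b : Fin L → Bool, (∏ ℓ, m (b ℓ)) * (1 - QL q z b)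
        = (∑ b : Fin L → Bool, ∏ ℓ, m (b ℓ))
          - ∑ b : Fin L → Bool, (∏ ℓ, m (b ℓ)) * QL q z b := by
          rw [← Finset.sum_sub_distrib]
          refine Finset.sum_congr rfl fun b _ => ?_
          ring
      _ = 1 - Γ ^ L := by rw [h2, h3]
  -- put it together
  rw [hmeas, Finset.sum_congr rfl fun a _ => hterm a, hfact]
  rw [← Finset.mul_prod_erase Finset.univ _ (Finset.mem_univ u), hgu]
  rw [Finset.prod_congr rfl fun w hw => hgw w (Finset.ne_of_mem_erase hw)]
  rw [Finset.prod_const, Finset.card_erase_of_mem (Finset.mem_univ u), Finset.card_univ,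
    Fintype.card_fin]
  rw [← ENNReal.ofReal_pow (by nlinarith [pow_le_one₀ hΓ0 hΓ1 (n := L)]),
    ← ENNReal.ofReal_mul (pow_nonneg (by linarith) L)]
end main

section main2
variable {n L : ℕ}

open scoped Classical in
lemma measurable_event (q : Bool → Bool → ℝ) (u : Fin n) :
    MeasurableSet {ω : (Fin n → Fin L → Bool) × (Fin n × Fin n → ℝ) |
      Isolated q ω u ∧ Scount ω u = 0} := by
  set A := Fin n → Fin L → Bool
  set X := Fin n × Fin n → ℝ
  set z : Fin L → Bool := fun _ => false with hz
  set E : Set (A × X) := {ω | Isolated q ω u ∧ Scount ω u = 0} with hE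
  set T : A → (Fin n × Fin n) → Set ℝ :=
    fun a p => {x : ℝ | ∀ v, v ≠ u → epair u v = p → QL q (a u) (a v) < x} with hT
  set S : A → Set X := fun a => if a u = z then Set.univ.pi (T a) else ∅ with hS
  have hScount : ∀ (ω : A × X), Scount ω u = 0 ↔ ω.1 u = z := by
    intro ω
    rw [Scount, Finset.card_eq_zero, Finset.filter_eq_empty_iff]
    simp [funext_iff, hz]
  have hdecomp : E = ⋃ a : A, {a} ×ˢ S a := by
    ext ⟨a, x⟩
    simp only [hE, Set.mem_setOf_eq, Set.mem_iUnion, Set.mem_prod, Set.mem_singleton_iff, hS]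
    constructor
    · rintro ⟨hiso, hsc⟩
      refine ⟨a, rfl, ?_⟩
      have hz' : a u = z := (hScount (a, x)).mp hsc
      rw [if_pos hz']
      intro p _
      intro v hvu hev
      have := hiso v
      rw [Adj] at this
      push_neg at this
      subst hev
      simpa [epair, min, max] using this (Ne.symm hvu)
    · rintro ⟨a', rfl, hx⟩
      by_cases hz' : a u = z
      · rw [if_pos hz'] at hx
        refine ⟨?_, (hScount (a, x)).mpr hz'⟩
        intro v
        rw [Adj]
        rintro ⟨huv, hle⟩
        have := hx (epair u v) (Set.mem_univ _) v (Ne.symm huv) rfl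
        rw [epair] at this
        exact absurd hle (not_le.mpr this)
      · rw [if_neg hz'] at hx
        exact absurd hx (Set.notMem_empty x)
  have hTmeas : ∀ a p, MeasurableSet (T a p) := by
    intro a p
    have : T a p = ⋂ v : Fin n, {x : ℝ | v ≠ u → epair u v = p → QL q (a u) (a v) < x} := by
      ext x; simp [hT, Set.mem_iInter]
    rw [this]
    refine MeasurableSet.iInter fun v => ?_
    by_cases hv : v ≠ u ∧ epair u v = p
    · have : {x : ℝ | v ≠ u → epair u v = p → QL q (a u) (a v) < x}
          = Set.Ioi (QL q (a u) (a v)) := by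
        ext x; simp [hv.1, hv.2, Set.mem_Ioi]
      rw [this]; exact measurableSet_Ioi
    · have : {x : ℝ | v ≠ u → epair u v = p → QL q (a u) (a v) < x} = Set.univ := by
        ext x
        simp only [Set.mem_setOf_eq, Set.mem_univ, iff_true]
        intro h1 h2
        exact absurd ⟨h1, h2⟩ hv
      rw [this]; exact MeasurableSet.univ
  have hSmeas : ∀ a, MeasurableSet (S a) := by
    intro a
    by_cases h : a u = z
    · simp only [hS, if_pos h]
      exact MeasurableSet.univ_pi fun p => hTmeas a _
    · simp only [hS, if_neg h]
      exact MeasurableSet.empty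
  have hsingmeas : ∀ a : A, MeasurableSet ({a} : Set A) := by
    intro a
    have : ({a} : Set A) = Set.univ.pi fun w => ({a w} : Set (Fin L → Bool)) := by
      rw [Set.univ_pi_singleton]
    rw [this]
    refine MeasurableSet.univ_pi fun w => ?_
    have : ({a w} : Set (Fin L → Bool)) = Set.univ.pi fun ℓ => ({a w ℓ} : Set Bool) := by
      rw [Set.univ_pi_singleton]
    rw [this]
    exact MeasurableSet.univ_pi fun ℓ => measurableSet_singleton _
  show MeasurableSet E
  rw [hdecomp]
  exact MeasurableSet.iUnion fun a => (hsingmeas a).prod (hSmeas a)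

lemma expectation_eq (μ1 : ℝ) (h0 : 0 ≤ μ1) (h1 : μ1 ≤ 1)
    (q : Bool → Bool → ℝ) (hq : ∀ a b, 0 < q a b ∧ q a b < 1) :
    ∫ ω, (numIsolatedWith q 0 ω : ℝ) ∂(magMeasure n L μ1)
      = n * (1 - μ1) ^ L * (1 - Gam μ1 q false ^ L) ^ (n - 1) := by
  classical
  haveI hbp : IsProbabilityMeasure (bern μ1) := bern_prob μ1 h0 h1
  haveI := unif01_prob
  haveI : IsProbabilityMeasure (magMeasure n L μ1) := by rw [magMeasure]; infer_instance
  set E : Fin n → Set ((Fin n → Fin L → Bool) × (Fin n × Fin n → ℝ)) :=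
    fun u => {ω | Isolated q ω u ∧ Scount ω u = 0} with hEdef
  have hrepr : ∀ ω, ((numIsolatedWith q 0 ω : ℕ) : ℝ)
      = ∑ u : Fin n, Set.indicator (E u) (fun _ => (1:ℝ)) ω := by
    intro ω
    rw [numIsolatedWith, Finset.card_filter]
    push_cast
    refine Finset.sum_congr rfl fun u _ => ?_
    by_cases h : Isolated q ω u ∧ Scount ω u = 0 <;>
      simp [h, Set.indicator_apply, hEdef, Set.mem_setOf_eq]
  rw [integral_congr_ae (Filter.Eventually.of_forall hrepr)]
  rw [integral_finset_sum _ (fun u _ => (integrable_const (1:ℝ)).indicator (measurable_event q u))]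
  have : ∀ u : Fin n, ∫ ω, Set.indicator (E u) (fun _ => (1:ℝ)) ω ∂(magMeasure n L μ1)
      = (1 - μ1) ^ L * (1 - Gam μ1 q false ^ L) ^ (n - 1) := by
    intro u
    rw [integral_indicator_const (1:ℝ) (measurable_event q u)]
    rw [measureReal_def, measure_event μ1 h0 h1 q hq u]
    rw [smul_eq_mul, mul_one]
    refine ENNReal.toReal_ofReal ?_
    have hΓ0 : 0 ≤ Gam μ1 q false := by
      rw [Gam]; nlinarith [(hq false false).1, (hq false true).1]
    have hΓ1 : Gam μ1 q false ≤ 1 := by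
      rw [Gam]; nlinarith [(hq false false).2, (hq false true).2,
        (hq false false).1, (hq false true).1]
    have := pow_le_one₀ hΓ0 hΓ1 (n := L)
    have h2 : (0:ℝ) ≤ (1 - μ1) ^ L := pow_nonneg (by linarith) L
    nlinarith [pow_nonneg (by nlinarith : (0:ℝ) ≤ 1 - Gam μ1 q false ^ L) (n-1)]
  rw [Finset.sum_congr rfl fun u _ => this u, Finset.sum_const, Finset.card_univ,
    Fintype.card_fin, nsmul_eq_mul, mul_assoc]
end main2

lemma log_sub_rpow_atBot {α : ℝ} (hα : 0 < α) :
    Tendsto (fun x : ℝ => Real.log x - x ^ α) atTop atBot := by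
  have h0 : Tendsto (fun x : ℝ => Real.log x / x ^ α) atTop (nhds 0) :=
    (isLittleO_log_rpow_atTop hα).tendsto_div_nhds_zero
  have h1 : Tendsto (fun x : ℝ => x ^ α) atTop atTop := tendsto_rpow_atTop hα
  have hbnd : ∀ᶠ x : ℝ in atTop, Real.log x - x ^ α ≤ -(x ^ α) / 2 := by
    have hev : ∀ᶠ x : ℝ in atTop, Real.log x / x ^ α < 1/2 :=
      h0.eventually (eventually_lt_nhds (by norm_num : (0:ℝ) < 1/2))
    filter_upwards [hev, eventually_ge_atTop (1:ℝ)] with x hx hx1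
    have hxpos : (0:ℝ) < x ^ α := rpow_pos_of_pos (by linarith) α
    rw [div_lt_iff₀ hxpos] at hx
    linarith
  refine tendsto_atBot_mono' atTop hbnd ?_
  have h2 : Tendsto (fun x : ℝ => -(x ^ α)) atTop atBot := tendsto_neg_atBot_iff.mpr h1
  have := h2.atBot_mul_const (by norm_num : (0:ℝ) < 1/2)
  simpa [div_eq_mul_inv] using this


lemma loglinear_atTop (L : ℕ → ℕ) (c ρ : ℝ)
    (hrat : Tendsto (fun n : ℕ => (L n : ℝ) / Real.log n) atTop (nhds ρ))
    (h : 0 < 1 + ρ * c) :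
    Tendsto (fun n : ℕ => Real.log n + (L n : ℝ) * c) atTop atTop := by
  have hlog : Tendsto (fun n : ℕ => Real.log n) atTop atTop :=
    Real.tendsto_log_atTop.comp tendsto_natCast_atTop_atTop
  have hco : Tendsto (fun n : ℕ => 1 + ((L n : ℝ) / Real.log n) * c) atTop (nhds (1 + ρ * c)) :=
    tendsto_const_nhds.add (hrat.mul_const c)
  have hmul := Filter.Tendsto.atTop_mul_pos h hlog hco
  refine hmul.congr' ?_
  filter_upwards [eventually_ge_atTop 2] with n hn
  have hlogpos : 0 < Real.log n := Real.log_pos (by exact_mod_cast hn)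
  field_simp

lemma loglinear_atBot (L : ℕ → ℕ) (c ρ : ℝ)
    (hrat : Tendsto (fun n : ℕ => (L n : ℝ) / Real.log n) atTop (nhds ρ))
    (h : 1 + ρ * c < 0) :
    Tendsto (fun n : ℕ => Real.log n + (L n : ℝ) * c) atTop atBot := by
  have hlog : Tendsto (fun n : ℕ => Real.log n) atTop atTop :=
    Real.tendsto_log_atTop.comp tendsto_natCast_atTop_atTop
  have hco : Tendsto (fun n : ℕ => 1 + ((L n : ℝ) / Real.log n) * c) atTop (nhds (1 + ρ * c)) :=
    tendsto_const_nhds.add (hrat.mul_const c)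
  have hmul := Filter.Tendsto.atTop_mul_neg h hlog hco
  refine hmul.congr' ?_
  filter_upwards [eventually_ge_atTop 2] with n hn
  have hlogpos : 0 < Real.log n := Real.log_pos (by exact_mod_cast hn)
  field_simp

lemma asymp_main (μ0 Γ ρ : ℝ) (hμ0a : 0 < μ0) (hμ0b : μ0 < 1) (hΓa : 0 < Γ) (hΓb : Γ < 1)
    (hρ : 0 < ρ) (hadm : 0 < 1 + ρ * Real.log μ0) (L : ℕ → ℕ)
    (hrat : Tendsto (fun n : ℕ => (L n : ℝ) / Real.log n) atTop (nhds ρ)) :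
    (1 + ρ * Real.log Γ < 0 →
      Tendsto (fun n : ℕ => (n:ℝ) * μ0 ^ L n * (1 - Γ ^ L n) ^ (n-1)) atTop atTop) ∧
    (0 < 1 + ρ * Real.log Γ →
      Tendsto (fun n : ℕ => (n:ℝ) * μ0 ^ L n * (1 - Γ ^ L n) ^ (n-1)) atTop (nhds 0)) := by
  have hexp : ∀ (x : ℝ), 0 < x → ∀ k : ℕ, x ^ k = Real.exp (k * Real.log x) := by
    intro x hx k
    rw [← Real.log_pow, Real.exp_log (pow_pos hx k)]
  have hΓpow0 : ∀ k : ℕ, 0 ≤ Γ ^ k := fun k => pow_nonneg hΓa.le k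
  have hΓpow1 : ∀ k : ℕ, Γ ^ k ≤ 1 := fun k => pow_le_one₀ hΓa.le hΓb.le
  constructor
  · intro hneg
    have h1 : Tendsto (fun n : ℕ => (n:ℝ) * μ0 ^ L n) atTop atTop := by
      have := Real.tendsto_exp_atTop.comp (loglinear_atTop L (Real.log μ0) ρ hrat hadm)
      refine this.congr' ?_
      filter_upwards [eventually_ge_atTop 1] with n hn
      have hn0 : (0:ℝ) < n := by exact_mod_cast hn
      simp only [Function.comp]
      rw [Real.exp_add, Real.exp_log hn0, ← hexp μ0 hμ0a]
    have h2 : Tendsto (fun n : ℕ => (n:ℝ) * Γ ^ L n) atTop (nhds 0) := by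
      have := Real.tendsto_exp_atBot.comp (loglinear_atBot L (Real.log Γ) ρ hrat hneg)
      refine this.congr' ?_
      filter_upwards [eventually_ge_atTop 1] with n hn
      have hn0 : (0:ℝ) < n := by exact_mod_cast hn
      simp only [Function.comp]
      rw [Real.exp_add, Real.exp_log hn0, ← hexp Γ hΓa]
    have h3 : Tendsto (fun n : ℕ => ((n:ℝ) - 1) * Γ ^ L n) atTop (nhds 0) := by
      refine squeeze_zero' ?_ ?_ h2
      · filter_upwards [eventually_ge_atTop 1] with n hn
        have : (1:ℝ) ≤ n := by exact_mod_cast hn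
        exact mul_nonneg (by linarith) (hΓpow0 _)
      · filter_upwards with n
        exact mul_le_mul_of_nonneg_right (by linarith) (hΓpow0 _)
    have h4 : Tendsto (fun n : ℕ => (1 - Γ ^ L n) ^ (n - 1)) atTop (nhds 1) := by
      refine tendsto_of_tendsto_of_tendsto_of_le_of_le'
        (g := fun n : ℕ => 1 - ((n:ℝ) - 1) * Γ ^ L n) (h := fun _ => (1:ℝ))
        (by simpa using tendsto_const_nhds.sub h3) tendsto_const_nhds ?_ ?_
      · filter_upwards [eventually_ge_atTop 1] with n hn
        have hb := one_add_mul_le_pow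
          (by nlinarith [hΓpow1 (L n), hΓpow0 (L n)] : (-2:ℝ) ≤ -(Γ ^ L n)) (n - 1)
        have hc : ((n - 1 : ℕ) : ℝ) = (n:ℝ) - 1 := by
          rw [Nat.cast_sub hn, Nat.cast_one]
        calc 1 - ((n:ℝ) - 1) * Γ ^ L n = 1 + ((n - 1 : ℕ) : ℝ) * (-(Γ ^ L n)) := by
              rw [hc]; ring
          _ ≤ (1 + -(Γ ^ L n)) ^ (n - 1) := hb
          _ = (1 - Γ ^ L n) ^ (n - 1) := by rw [← sub_eq_add_neg]
      · filter_upwards with n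
        exact pow_le_one₀ (by nlinarith [hΓpow1 (L n)]) (by nlinarith [hΓpow0 (L n)])
    exact Filter.Tendsto.atTop_mul_pos one_pos h1 h4
  · intro hpos
    set g := Real.log Γ with hg
    have hgneg : g < 0 := Real.log_neg hΓa hΓb
    set α := (1 + ρ * g) / 2 with hα
    have hαpos : 0 < α := by rw [hα]; linarith
    have hlog : Tendsto (fun n : ℕ => Real.log n) atTop atTop :=
      Real.tendsto_log_atTop.comp tendsto_natCast_atTop_atTop
    have hco : Tendsto (fun n : ℕ => 1 + ((L n : ℝ) / Real.log n) * g) atTop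
        (nhds (1 + ρ * g)) := tendsto_const_nhds.add (hrat.mul_const g)
    -- eventual lower bound on (n-1) Γ^L
    have hD : ∀ᶠ n : ℕ in atTop, ((n:ℝ)) ^ α ≤ ((n:ℝ) - 1) * Γ ^ L n := by
      have e2 : ∀ᶠ n : ℕ in atTop, 3 * α / 2 ≤ 1 + ((L n : ℝ) / Real.log n) * g :=
        hco.eventually (eventually_ge_nhds (by rw [hα]; linarith))
      have e3 : ∀ᶠ n : ℕ in atTop, 2 / α ≤ Real.log n := hlog.eventually_ge_atTop (2 / α)
      filter_upwards [eventually_ge_atTop 2, e2, e3] with n hn he2 he3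
      have hn2 : (2:ℝ) ≤ n := by exact_mod_cast hn
      have hn0 : (0:ℝ) < n := by linarith
      have hn1 : (0:ℝ) < (n:ℝ) - 1 := by linarith
      have hlogpos : 0 < Real.log n := Real.log_pos (by linarith)
      have hL : (L n : ℝ) * g = Real.log n * (((L n : ℝ) / Real.log n) * g) := by
        field_simp
      -- log (n-1) ≥ log n - 1
      have hlog1 : Real.log n - 1 ≤ Real.log ((n:ℝ) - 1) := by
        have h2le : (n:ℝ) / 2 ≤ (n:ℝ) - 1 := by linarith
        have := Real.log_le_log (by linarith : (0:ℝ) < (n:ℝ)/2) h2le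
        rw [Real.log_div (by linarith) (by norm_num)] at this
        nlinarith [Real.log_two_lt_d9]
      have hrw : ((n:ℝ) - 1) * Γ ^ L n = Real.exp (Real.log ((n:ℝ) - 1) + (L n : ℝ) * g) := by
        rw [Real.exp_add, Real.exp_log hn1, hg, ← hexp Γ hΓa]
      rw [hrw, Real.rpow_def_of_pos hn0]
      rw [Real.exp_le_exp]
      have key : α * Real.log n + 1 ≤ Real.log n * (1 + ((L n : ℝ) / Real.log n) * g) := by
        have h1 : 3 * α / 2 * Real.log n ≤ Real.log n * (1 + ((L n : ℝ) / Real.log n) * g) := by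
          calc 3 * α / 2 * Real.log n ≤ (1 + ((L n : ℝ) / Real.log n) * g) * Real.log n :=
              mul_le_mul_of_nonneg_right he2 hlogpos.le
            _ = Real.log n * (1 + ((L n : ℝ) / Real.log n) * g) := by ring
        have h2 : α / 2 * Real.log n ≥ 1 := by
          have := mul_le_mul_of_nonneg_left he3 (by linarith : (0:ℝ) ≤ α / 2)
          rw [div_mul_eq_mul_div, mul_div_assoc] at this
          have hαne : α ≠ 0 := ne_of_gt hαpos
          calc (1:ℝ) = α / 2 * (2 / α) := by field_simp
            _ ≤ α / 2 * Real.log n := mul_le_mul_of_nonneg_left he3 (by linarith)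
        nlinarith
      calc Real.log n * α ≤ Real.log n * (1 + ((L n : ℝ) / Real.log n) * g) - 1 := by
            nlinarith
        _ = Real.log n - 1 + (L n : ℝ) * g := by rw [hL]; ring
        _ ≤ Real.log ((n:ℝ) - 1) + (L n : ℝ) * g := by linarith
    -- upper bound on f
    have hfb : ∀ᶠ n : ℕ in atTop,
        (n:ℝ) * μ0 ^ L n * (1 - Γ ^ L n) ^ (n - 1) ≤ Real.exp (Real.log n - (n:ℝ) ^ α) := by
      filter_upwards [eventually_ge_atTop 2, hD] with n hn hDn
      have hn2 : (2:ℝ) ≤ n := by exact_mod_cast hn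
      have hn0 : (0:ℝ) < n := by linarith
      have hc : ((n - 1 : ℕ) : ℝ) = (n:ℝ) - 1 := by
        rw [Nat.cast_sub (by omega : 1 ≤ n), Nat.cast_one]
      have step1 : (1 - Γ ^ L n) ^ (n - 1) ≤ Real.exp (-(((n:ℝ) - 1) * Γ ^ L n)) := by
        have hb : 1 - Γ ^ L n ≤ Real.exp (-(Γ ^ L n)) := by
          have := Real.add_one_le_exp (-(Γ ^ L n)); linarith
        calc (1 - Γ ^ L n) ^ (n - 1) ≤ (Real.exp (-(Γ ^ L n))) ^ (n - 1) :=
            pow_le_pow_left₀ (by nlinarith [hΓpow1 (L n)]) hb (n - 1)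
          _ = Real.exp (((n - 1 : ℕ) : ℝ) * (-(Γ ^ L n))) := (Real.exp_nat_mul _ _).symm
          _ = Real.exp (-(((n:ℝ) - 1) * Γ ^ L n)) := by rw [hc]; congr 1; ring
      have step2 : (n:ℝ) * μ0 ^ L n ≤ Real.exp (Real.log n) := by
        rw [Real.exp_log hn0]
        nlinarith [pow_le_one₀ hμ0a.le hμ0b.le (n := L n), pow_nonneg hμ0a.le (L n)]
      calc (n:ℝ) * μ0 ^ L n * (1 - Γ ^ L n) ^ (n - 1)
          ≤ Real.exp (Real.log n) * Real.exp (-(((n:ℝ) - 1) * Γ ^ L n)) := by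
            exact mul_le_mul step2 step1
              (pow_nonneg (by nlinarith [hΓpow1 (L n)]) _) (Real.exp_pos _).le
        _ = Real.exp (Real.log n - ((n:ℝ) - 1) * Γ ^ L n) := by
            rw [← Real.exp_add]; exact congrArg Real.exp (by ring)
        _ ≤ Real.exp (Real.log n - (n:ℝ) ^ α) := by
            rw [Real.exp_le_exp]; linarith
    have htail : Tendsto (fun n : ℕ => Real.exp (Real.log n - (n:ℝ) ^ α)) atTop (nhds 0) := by
      have := (log_sub_rpow_atBot hαpos).comp (tendsto_natCast_atTop_atTop (R := ℝ))
      exact Real.tendsto_exp_atBot.comp this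
    refine squeeze_zero' ?_ hfb htail
    filter_upwards with n
    have : 0 ≤ 1 - Γ ^ L n := by nlinarith [hΓpow1 (L n)]
    positivity

end aux

set_option maxHeartbeats 1000000 in
theorem mag_zero_infinity_law_first_moment_all_zero_attributes
    (μ1 : ℝ) (hμ1 : 0 < μ1) (hμ1' : μ1 < 1)
    (q : Bool → Bool → ℝ) (hq : ∀ a b, 0 < q a b ∧ q a b < 1)
    (hqsym : q false true = q true false)
    (hΓ : Gam μ1 q false < Gam μ1 q true)
    (ρ : ℝ) (hρ : 0 < ρ)
    (hμ0 : 1 + ρ * Real.log (1 - μ1) > 0)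
    (L : ℕ → ℕ) (hL : Admissible ρ L) :
    (∀ n, ∫ ω, (numIsolatedWith q 0 ω : ℝ) ∂(magMeasure n (L n) μ1)
        = n * (1 - μ1) ^ L n * (1 - Gam μ1 q false ^ L n) ^ (n - 1)) ∧
    (1 + ρ * Real.log (Gam μ1 q false) < 0 →
      Tendsto (fun n => ∫ ω, (numIsolatedWith q 0 ω : ℝ) ∂(magMeasure n (L n) μ1))
        atTop atTop) ∧
    (1 + ρ * Real.log (Gam μ1 q false) > 0 →
      Tendsto (fun n => ∫ ω, (numIsolatedWith q 0 ω : ℝ) ∂(magMeasure n (L n) μ1))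
        atTop (nhds 0))  := by
  have h0 : (0:ℝ) ≤ μ1 := hμ1.le
  have h1 : μ1 ≤ 1 := hμ1'.le
  have hpart1 : ∀ n, ∫ ω, (numIsolatedWith q 0 ω : ℝ) ∂(magMeasure n (L n) μ1)
      = n * (1 - μ1) ^ L n * (1 - Gam μ1 q false ^ L n) ^ (n - 1) :=
    fun n => expectation_eq μ1 h0 h1 q hq
  have hΓa : 0 < Gam μ1 q false := by
    rw [Gam]
    nlinarith [(hq false false).1, (hq false true).1]
  have hΓb : Gam μ1 q false < 1 := by
    rw [Gam]
    nlinarith [(hq false false).2, (hq false true).2]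
  -- ratio limit from admissibility
  have hne : ∀ᶠ (n : ℕ) in atTop, ρ * Real.log n ≠ 0 := by
    filter_upwards [eventually_ge_atTop 2] with n hn
    have hl : 0 < Real.log n := Real.log_pos (by exact_mod_cast hn)
    exact ne_of_gt (mul_pos hρ hl)
  have h1t := (Asymptotics.isEquivalent_iff_tendsto_one hne).mp hL
  have h2t := h1t.const_mul ρ
  rw [mul_one] at h2t
  have hrat : Tendsto (fun n : ℕ => (L n : ℝ) / Real.log n) atTop (nhds ρ) := by
    refine h2t.congr' ?_
    filter_upwards [eventually_ge_atTop 2] with n hn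
    have hl : 0 < Real.log n := Real.log_pos (by exact_mod_cast hn)
    have hρne : ρ ≠ 0 := ne_of_gt hρ
    simp only [Pi.div_apply]
    field_simp
  have hmain := asymp_main (1 - μ1) (Gam μ1 q false) ρ (by linarith) (by linarith)
    hΓa hΓb hρ hμ0 L hrat
  refine ⟨hpart1, fun h => ?_, fun h => ?_⟩
  · exact (hmain.1 h).congr (fun n => (hpart1 n).symm)
  · exact (hmain.2 h).congr (fun n => (hpart1 n).symm)
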